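/- arXiv:2310.01750 — 7 statements merged into one kernel-verified Lean document; each statement's English description precedes it below -/
import Mathlib

section
/- Let ξ = (ξ₁, ξ₂) be the random vector on {-1,0,1}² with P(ξ=(x,x))=0 for all x, P(ξ=(-1,0))=P(ξ=(0,1))=P(ξ=(1,-1))=1/9, and P(ξ=(0,-1))=P(ξ=(1,0))=P(ξ=(-1,1))=2/9. Then for every function f : {-1,0,1} → {0,1}, the pair (f(ξ₁), f(ξ₂)) is exchangeable. -/
/-- Law of `(f ξ₁, f ξ₂)` when `(ξ₁, ξ₂)` has pmf `μ` on `{-1,0,1}²`. -/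
noncomputable def pushPair (μ : ℤ × ℤ → ℝ) (f : ℤ → Fin 2) (a b : Fin 2) : ℝ :=
  ∑ x ∈ ({-1, 0, 1} : Finset ℤ), ∑ y ∈ ({-1, 0, 1} : Finset ℤ),
    if f x = a ∧ f y = b then μ (x, y) else 0

/-- The specified pmf on `{-1,0,1}²` is two-color exchangeable. -/
theorem stmt_1 (μ : ℤ × ℤ → ℝ)
    (hdiag : ∀ x ∈ ({-1, 0, 1} : Finset ℤ), μ (x, x) = 0)
    (h1 : μ (-1, 0) = 1/9) (h2 : μ (0, 1) = 1/9) (h3 : μ (1, -1) = 1/9)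
    (h4 : μ (0, -1) = 2/9) (h5 : μ (1, 0) = 2/9) (h6 : μ (-1, 1) = 2/9) :
    ∀ f : ℤ → Fin 2, ∀ a b : Fin 2, pushPair μ f a b = pushPair μ f b a := by
  intro f a b
  have d1 := hdiag (-1) (by decide)
  have d2 := hdiag 0 (by decide)
  have d3 := hdiag 1 (by decide)
  simp only [pushPair, Finset.sum_insert, Finset.mem_insert, Finset.mem_singleton,
    Finset.sum_singleton]
  fin_cases a <;> fin_cases b <;>
    rcases Fin.exists_fin_two.mp ⟨f (-1), rfl⟩ with hm | hm <;>
    rcases Fin.exists_fin_two.mp ⟨f 0, rfl⟩ with h0 | h0 <;>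
    rcases Fin.exists_fin_two.mp ⟨f 1, rfl⟩ with hp | hp <;>
    simp [hm, h0, hp, d1, d2, d3, h1, h2, h3, h4, h5, h6] <;> ring
end

section
/- There exists a probability distribution μ on {-1,0,1}² that is two-color exchangeable but not exchangeable. -/
lemma fin2cases (x : Fin 2) : x = 0 ∨ x = 1 := by fin_cases x <;> simp

/-- There is a probability distribution on `{-1,0,1}²` that is two-color
exchangeable but not exchangeable. -/
theorem stmt_2 :
    ∃ μ : ℤ × ℤ → ℝ,
      (∀ p, 0 ≤ μ p) ∧
      (∑ x ∈ ({-1, 0, 1} : Finset ℤ), ∑ y ∈ ({-1, 0, 1} : Finset ℤ), μ (x, y) = 1) ∧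
      (∀ x y : ℤ, x ∉ ({-1, 0, 1} : Finset ℤ) ∨ y ∉ ({-1, 0, 1} : Finset ℤ) →
        μ (x, y) = 0) ∧
      (∀ f : ℤ → Fin 2, ∀ a b : Fin 2, pushPair μ f a b = pushPair μ f b a) ∧
      ¬ (∀ x ∈ ({-1, 0, 1} : Finset ℤ), ∀ y ∈ ({-1, 0, 1} : Finset ℤ),
          μ (x, y) = μ (y, x)) := by
  refine ⟨fun p => if p = (-1, 0) ∨ p = (0, 1) ∨ p = (1, -1) then 1/3 else 0,
    ?_, ?_, ?_, ?_, ?_⟩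
  · intro p
    dsimp only
    split <;> norm_num
  · norm_num
  · intro x y h
    rcases h with h | h <;> simp only [Finset.mem_insert, Finset.mem_singleton] at h <;>
      push_neg at h <;>
    · dsimp only
      split
      · rename_i hc
        rcases hc with hc | hc | hc <;> simp_all [Prod.ext_iff]
      · rfl
  · intro f a b
    unfold pushPair
    simp only [Finset.sum_insert, Finset.mem_insert, Finset.mem_singleton,
      Finset.sum_singleton]
    norm_num [Prod.ext_iff]
    rcases fin2cases (f (-1)) with h1 | h1 <;> rcases fin2cases (f 0) with h2 | h2 <;>
      rcases fin2cases (f 1) with h3 | h3 <;> fin_cases a <;> fin_cases b <;>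
      simp [h1, h2, h3]
  · intro h
    have h1 := h (-1) (by norm_num) 0 (by norm_num)
    norm_num [Prod.ext_iff] at h1
end

section
/- Let ξ=(ξ₁,ξ₂) take values in {-1,0,1}² with pmf μ, and write x₂=μ(-1,0), x̃₂=μ(0,-1), x₄=μ(0,1), x̃₄=μ(1,0), x₆=μ(1,-1), x̃₆=μ(-1,1). Then ξ is two-color exchangeable if and only if x₂+x̃₆ = x̃₂+x₆, x₂+x̃₄ = x̃₂+x₄, and x₄+x̃₆ = x̃₄+x₆. -/
/-- A pmf of a pair with values in `{-1,0,1}` is two-color exchangeable iff the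
three stated linear conditions on the off-diagonal probabilities hold, where
`x₂ = μ(-1,0)`, `x̃₂ = μ(0,-1)`, `x₄ = μ(0,1)`, `x̃₄ = μ(1,0)`,
`x₆ = μ(1,-1)`, `x̃₆ = μ(-1,1)`. -/
theorem stmt_4 (μ : ℤ × ℤ → ℝ)
    (hnn : ∀ p, 0 ≤ μ p)
    (hsum : ∑ x ∈ ({-1, 0, 1} : Finset ℤ), ∑ y ∈ ({-1, 0, 1} : Finset ℤ), μ (x, y) = 1)
    (hsupp : ∀ x y : ℤ, x ∉ ({-1, 0, 1} : Finset ℤ) ∨ y ∉ ({-1, 0, 1} : Finset ℤ) →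
      μ (x, y) = 0) :
    (∀ f : ℤ → Fin 2, ∀ a b : Fin 2, pushPair μ f a b = pushPair μ f b a) ↔
      (μ (-1, 0) + μ (-1, 1) = μ (0, -1) + μ (1, -1) ∧
       μ (-1, 0) + μ (1, 0) = μ (0, -1) + μ (0, 1) ∧
       μ (0, 1) + μ (-1, 1) = μ (1, 0) + μ (1, -1)) := by
  constructor
  · intro h
    refine ⟨?_, ?_, ?_⟩
    · have := h (fun x => if x = -1 then 1 else 0) 1 0
      norm_num [pushPair, Finset.sum_insert] at this
      linarith
    · have := h (fun x => if x = 0 then 1 else 0) 0 1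
      norm_num [pushPair, Finset.sum_insert] at this
      linarith
    · have := h (fun x => if x = 1 then 1 else 0) 1 0
      norm_num [pushPair, Finset.sum_insert] at this
      linarith
  · rintro ⟨h1, h2, h3⟩ f a b
    have htwo : ∀ x : Fin 2, x = 0 ∨ x = 1 := by decide
    rcases htwo (f (-1)) with hm | hm <;> rcases htwo (f 0) with h0 | h0 <;>
      rcases htwo (f 1) with hp | hp <;> rcases htwo a with ha | ha <;>
      rcases htwo b with hb | hb <;> subst ha <;> subst hb <;>
      norm_num [pushPair, Finset.sum_insert, hm, h0, hp] <;> linarith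
end

section
/- For n ≥ 3, the measure μ on Ω defined by μ(f_{-1,i})=μ(f_{1,i})=μ(s_{0,i})=(n-i+1)/(3n(n+1)) and μ(s_{-1,i})=μ(s_{1,i})=μ(f_{0,i})=i/(3n(n+1)) is not exchangeable. -/
/-- The symbol set `{-1, 0, 1} ⊆ ℤ`. -/
abbrev S3 : Finset ℤ := {-1, 0, 1}

/-- The symbol `-1`. -/
def em1 : ↥S3 := ⟨-1, by decide⟩
/-- The symbol `0`. -/
def e0 : ↥S3 := ⟨0, by decide⟩
/-- The symbol `1`. -/
def e1 : ↥S3 := ⟨1, by decide⟩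

/-- Multiplicity of the symbol `α` in the string `ω`. -/
def cnt {n : ℕ} (ω : Fin n → ↥S3) (α : ↥S3) : ℕ :=
  (Finset.univ.filter fun i => ω i = α).card

/-- `Ω`: strings in `{-1,0,1}ⁿ` in which every symbol appears `0`, `1`
or `n-1` times. -/
def Omega (n : ℕ) : Finset (Fin n → ↥S3) :=
  Finset.univ.filter fun ω => ∀ α : ↥S3, cnt ω α = 0 ∨ cnt ω α = 1 ∨ cnt ω α = n - 1

/-- The string with `α` at position `i` and `β` everywhere else. -/
def str (n : ℕ) (α β : ↥S3) (i : Fin n) : Fin n → ↥S3 :=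
  fun k => if k = i then α else β

/- For a symbol `α` and a position `i`, the two elements of `Ω_α` having `α`
exactly at position `i` are `str n α β i` for the two symbols `β ≠ α`; in
lexicographic order they are `f_{α,i}` (smaller `β`) and `s_{α,i}` (larger
`β`).  Explicitly (with `i` one-based in the paper, zero-based here):
`f_{-1,i} = str (-1) 0 i`, `s_{-1,i} = str (-1) 1 i`,
`f_{0,i} = str 0 (-1) i`, `s_{0,i} = str 0 1 i`,
`f_{1,i} = str 1 (-1) i`, `s_{1,i} = str 1 0 i`. -/

/-- The measure of the paper: `μ(f_{-1,i}) = μ(f_{1,i}) = μ(s_{0,i})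
= (n-i+1)/(3n(n+1))` and `μ(s_{-1,i}) = μ(s_{1,i}) = μ(f_{0,i})
= i/(3n(n+1))` for one-based `i`, and `μ = 0` off these `6n` strings. -/
noncomputable def muPaper (n : ℕ) : (Fin n → ↥S3) → ℝ := fun x =>
  ∑ i : Fin n,
    ((if x = str n em1 e0 i ∨ x = str n e1 em1 i ∨ x = str n e0 e1 i then
        ((n : ℝ) - (i : ℕ)) / (3 * n * (n + 1)) else 0) +
     (if x = str n em1 e1 i ∨ x = str n e1 e0 i ∨ x = str n e0 em1 i then
        (((i : ℕ) : ℝ) + 1) / (3 * n * (n + 1)) else 0))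


lemma str_eq {n : ℕ} (hn : 3 ≤ n) {α β α' β' : ↥S3} (hab : α ≠ β) (hab' : α' ≠ β')
    {i j : Fin n} (h : str n α β i = str n α' β' j) : α = α' ∧ β = β' ∧ i = j := by
  by_cases hij : i = j
  · subst hij
    have h1 := congrFun h i
    simp [str] at h1
    obtain ⟨k, hk⟩ : ∃ k : Fin n, k ≠ i := by
      rcases eq_or_ne i ⟨0, by omega⟩ with h | h
      · exact ⟨⟨1, by omega⟩, by subst h; simp [Fin.ext_iff]⟩
      · exact ⟨⟨0, by omega⟩, by simpa [eq_comm] using h⟩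
    have h2 := congrFun h k
    simp [str, hk] at h2
    exact ⟨h1, h2, rfl⟩
  · exfalso
    have h1 := congrFun h i
    have h2 := congrFun h j
    simp [str, hij, Ne.symm hij] at h1 h2
    obtain ⟨m, hm, hmi, hmj⟩ : ∃ m, m < n ∧ m ≠ i.val ∧ m ≠ j.val := by
      have hi := i.isLt; have hj := j.isLt
      have hij' : i.val ≠ j.val := fun e => hij (Fin.ext e)
      by_cases h0 : 0 ≠ i.val ∧ 0 ≠ j.val
      · exact ⟨0, by omega, h0.1, h0.2⟩
      by_cases h1' : 1 ≠ i.val ∧ 1 ≠ j.val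
      · exact ⟨1, by omega, h1'.1, h1'.2⟩
      · simp only [not_and_or, not_ne_iff] at h0 h1'
        exact ⟨2, by omega, by omega, by omega⟩
    have hk1 : (⟨m, hm⟩ : Fin n) ≠ i := fun e => hmi (congrArg Fin.val e)
    have hk2 : (⟨m, hm⟩ : Fin n) ≠ j := fun e => hmj (congrArg Fin.val e)
    have h3 := congrFun h (⟨m, hm⟩ : Fin n)
    simp [str, hk1, hk2] at h3
    exact hab' (h2.symm.trans h3)

lemma mu_str (n : ℕ) (hn : 3 ≤ n) (i : Fin n) :
    muPaper n (str n em1 e0 i) = ((n : ℝ) - (i : ℕ)) / (3 * n * (n + 1)) := by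
  unfold muPaper
  rw [Finset.sum_eq_single i]
  · have h1 : str n em1 e0 i = str n em1 e0 i := rfl
    rw [if_pos (Or.inl h1), if_neg, add_zero]
    rintro (h | h | h) <;>
      · have := str_eq hn (by decide) (by decide) h
        simp [em1, e0, e1, Subtype.ext_iff] at this
  · intro j _ hji
    rw [if_neg, if_neg, add_zero]
    all_goals rintro (h | h | h) <;>
      (obtain ⟨ha, hb, hij'⟩ := str_eq hn (by decide) (by decide) h;
       first
         | exact hji hij'.symm
         | simp [em1, e0, e1, Subtype.ext_iff] at ha hb)
  · intro hi; exact absurd (Finset.mem_univ i) hi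

/-- The measure `μ` of the paper is not exchangeable. -/
theorem stmt_10 (n : ℕ) (hn : 3 ≤ n) :
    ¬ (∀ π : Equiv.Perm (Fin n), ∀ x : Fin n → ↥S3,
        muPaper n (x ∘ π) = muPaper n x) := by
  intro h
  set i0 : Fin n := ⟨0, by omega⟩
  set i1 : Fin n := ⟨1, by omega⟩
  have hne : i0 ≠ i1 := by simp [i0, i1, Fin.ext_iff]
  have key := h (Equiv.swap i0 i1) (str n em1 e0 i0)
  have hcomp : (str n em1 e0 i0) ∘ (Equiv.swap i0 i1) = str n em1 e0 i1 := by
    funext k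
    simp only [Function.comp, str]
    rcases eq_or_ne k i0 with rfl | hk0
    · simp [Equiv.swap_apply_left, Ne.symm hne, hne]
    rcases eq_or_ne k i1 with rfl | hk1
    · simp [Equiv.swap_apply_right]
    · simp [Equiv.swap_apply_of_ne_of_ne hk0 hk1, hk0, hk1]
  rw [hcomp, mu_str n hn, mu_str n hn] at key
  have hD : (3 : ℝ) * n * (n + 1) ≠ 0 := by positivity
  have hv0 : (i0 : ℕ) = 0 := rfl
  have hv1 : (i1 : ℕ) = 1 := rfl
  rw [hv0, hv1] at key
  rw [div_eq_div_iff (by positivity) (by positivity)] at key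
  have hn' : (3:ℝ) ≤ (n:ℝ) := by exact_mod_cast hn
  push_cast at key
  nlinarith [mul_pos (mul_pos (by norm_num : (0:ℝ) < 3) (by linarith : (0:ℝ) < n))
    (by linarith : (0:ℝ) < (n:ℝ) + 1)]
end

section
/- For n ≥ 3, the measure μ on Ω defined by μ(f_{-1,i})=μ(f_{1,i})=μ(s_{0,i})=(n-i+1)/(3n(n+1)) and μ(s_{-1,i})=μ(s_{1,i})=μ(f_{0,i})=i/(3n(n+1)) is two-color exchangeable: for every f : {-1,0,1} → {0,1}, the pushforward of μ under coordinatewise f is an exchangeable measure on {0,1}ⁿ. -/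
/- ### auxiliary definitions -/

noncomputable def wt1 (n m : ℕ) : ℝ := ((n : ℝ) - m) / (3 * n * (n + 1))
noncomputable def wt2 (n m : ℕ) : ℝ := ((m : ℝ) + 1) / (3 * n * (n + 1))

/-- binary string with `a` at `i`, `b` elsewhere -/
def bstr (n : ℕ) (a b : Fin 2) (i : Fin n) : Fin n → Fin 2 :=
  fun k => if k = i then a else b

lemma str_inj {n : ℕ} (hn : 2 ≤ n) {α β α' β' : ↥S3} {i : Fin n}
    (h : str n α β i = str n α' β' i) : α = α' ∧ β = β' := by
  have : Nontrivial (Fin n) := Fin.nontrivial_iff_two_le.mpr hn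
  obtain ⟨k, hk⟩ := exists_ne i
  have h1 := congrFun h i
  have h2 := congrFun h k
  simp [str, hk] at h1 h2
  exact ⟨h1, h2⟩

lemma split3 {n : ℕ} {x a b c : Fin n → ↥S3} (hab : a ≠ b) (hac : a ≠ c) (hbc : b ≠ c) (w : ℝ) :
    (if x = a ∨ x = b ∨ x = c then w else 0) =
      (if x = a then w else 0) + (if x = b then w else 0) + (if x = c then w else 0) := by
  by_cases h1 : x = a <;> by_cases h2 : x = b <;> by_cases h3 : x = c <;> simp_all

lemma collapse {n : ℕ} (P : (Fin n → ↥S3) → Prop) [DecidablePred P] (a : Fin n → ↥S3) (w : ℝ) :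
    (∑ x : Fin n → ↥S3, if P x then (if x = a then w else 0) else 0) =
      if P a then w else 0 := by
  rw [Finset.sum_congr rfl (fun x _ =>
    show (if P x then (if x = a then w else 0) else 0) =
        (if x = a then (if P a then w else 0) else 0) from by
      by_cases h : x = a <;> simp [h])]
  simp

lemma comp_str {n : ℕ} (f : ↥S3 → Fin 2) (α β : ↥S3) (i : Fin n) :
    (fun k => f (str n α β i k)) = bstr n (f α) (f β) i := by
  funext k; simp [str, bstr, apply_ite f]

lemma pushforward {n : ℕ} (hn : 2 ≤ n) (f : ↥S3 → Fin 2) (z : Fin n → Fin 2) :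
    (∑ x : Fin n → ↥S3, if (fun i => f (x i)) = z then muPaper n x else 0) =
      ∑ i : Fin n,
        (((if bstr n (f em1) (f e0) i = z then wt1 n i else 0) +
          (if bstr n (f e1) (f em1) i = z then wt1 n i else 0) +
          (if bstr n (f e0) (f e1) i = z then wt1 n i else 0)) +
         ((if bstr n (f em1) (f e1) i = z then wt2 n i else 0) +
          (if bstr n (f e1) (f e0) i = z then wt2 n i else 0) +
          (if bstr n (f e0) (f em1) i = z then wt2 n i else 0))) := by
  have hd : ∀ (i : Fin n) (α β α' β' : ↥S3), (α ≠ α' ∨ β ≠ β') →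
      str n α β i ≠ str n α' β' i := by
    intro i α β α' β' h hEq
    obtain ⟨h1, h2⟩ := str_inj hn hEq
    cases h <;> simp_all
  have step1 : ∀ x : Fin n → ↥S3,
      (if (fun i => f (x i)) = z then muPaper n x else 0) =
        ∑ i : Fin n,
          ((if (fun i => f (x i)) = z then
              (if x = str n em1 e0 i ∨ x = str n e1 em1 i ∨ x = str n e0 e1 i then wt1 n i else 0)
            else 0) +
           (if (fun i => f (x i)) = z then
              (if x = str n em1 e1 i ∨ x = str n e1 e0 i ∨ x = str n e0 em1 i then wt2 n i else 0)
            else 0)) := by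
    intro x
    by_cases hP : (fun i => f (x i)) = z <;> simp [hP, muPaper, wt1, wt2]
  rw [Finset.sum_congr rfl fun x _ => step1 x, Finset.sum_comm]
  refine Finset.sum_congr rfl fun i _ => ?_
  rw [Finset.sum_add_distrib]
  congr 1
  · have e1' : ∀ x : Fin n → ↥S3,
        (if (fun i => f (x i)) = z then
            (if x = str n em1 e0 i ∨ x = str n e1 em1 i ∨ x = str n e0 e1 i then wt1 n i else 0)
          else 0) =
        ((if (fun i => f (x i)) = z then (if x = str n em1 e0 i then wt1 n i else 0) else 0) +
         (if (fun i => f (x i)) = z then (if x = str n e1 em1 i then wt1 n i else 0) else 0) +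
         (if (fun i => f (x i)) = z then (if x = str n e0 e1 i then wt1 n i else 0) else 0)) := by
      intro x
      rw [split3 (hd i _ _ _ _ (by left; decide)) (hd i _ _ _ _ (by left; decide))
        (hd i _ _ _ _ (by left; decide))]
      by_cases hP : (fun i => f (x i)) = z <;> simp [hP]
    rw [Finset.sum_congr rfl fun x _ => e1' x, Finset.sum_add_distrib, Finset.sum_add_distrib,
      collapse, collapse, collapse]
    simp only [comp_str]
  · have e2' : ∀ x : Fin n → ↥S3,
        (if (fun i => f (x i)) = z then
            (if x = str n em1 e1 i ∨ x = str n e1 e0 i ∨ x = str n e0 em1 i then wt2 n i else 0)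
          else 0) =
        ((if (fun i => f (x i)) = z then (if x = str n em1 e1 i then wt2 n i else 0) else 0) +
         (if (fun i => f (x i)) = z then (if x = str n e1 e0 i then wt2 n i else 0) else 0) +
         (if (fun i => f (x i)) = z then (if x = str n e0 em1 i then wt2 n i else 0) else 0)) := by
      intro x
      rw [split3 (hd i _ _ _ _ (by left; decide)) (hd i _ _ _ _ (by left; decide))
        (hd i _ _ _ _ (by left; decide))]
      by_cases hP : (fun i => f (x i)) = z <;> simp [hP]
    rw [Finset.sum_congr rfl fun x _ => e2' x, Finset.sum_add_distrib, Finset.sum_add_distrib,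
      collapse, collapse, collapse]
    simp only [comp_str]


/-- The measure `μ` of the paper is two-color exchangeable: for every
`f : {-1,0,1} → {0,1}`, the pushforward of `μ` under coordinatewise `f` is an
exchangeable measure on `{0,1}ⁿ`. -/
theorem stmt_11 (n : ℕ) (hn : 3 ≤ n) :
    ∀ f : ↥S3 → Fin 2, ∀ π : Equiv.Perm (Fin n), ∀ y : Fin n → Fin 2,
      (∑ x : Fin n → ↥S3, if (fun i => f (x i)) = y ∘ π then muPaper n x else 0) =
        ∑ x : Fin n → ↥S3, if (fun i => f (x i)) = y then muPaper n x else 0 := by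
  intro f π y
  have hn2 : 2 ≤ n := by omega
  rw [pushforward hn2 f (y ∘ π), pushforward hn2 f y]
  have hbs : ∀ (a b : Fin 2) (i : Fin n), (bstr n a b i = y ∘ π) ↔ (bstr n a b (π i) = y) := by
    intro a b i
    constructor
    · intro h; funext k
      have h' := congrFun h (π.symm k)
      simpa [bstr, Equiv.symm_apply_eq] using h'
    · intro h; funext k
      have h' := congrFun h (π k)
      simpa [bstr] using h'
  simp only [hbs]
  have tri : ∀ (p q r : Fin 2) (c : Fin 2 → Fin 2 → ℝ),
      c p q + c r p + c q r = c p r + c r q + c q p := by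
    intro p q r c
    fin_cases p <;> fin_cases q <;> fin_cases r <;> ring
  have hw : ∀ (m m' : Fin n), wt1 n m + wt2 n m = wt1 n m' + wt2 n m' := by
    intro m m'
    unfold wt1 wt2
    rw [← add_div, ← add_div]
    ring_nf
  have key : ∀ (j m m' : Fin n),
      (((if bstr n (f em1) (f e0) j = y then wt1 n m else 0) +
        (if bstr n (f e1) (f em1) j = y then wt1 n m else 0) +
        (if bstr n (f e0) (f e1) j = y then wt1 n m else 0)) +
       ((if bstr n (f em1) (f e1) j = y then wt2 n m else 0) +
        (if bstr n (f e1) (f e0) j = y then wt2 n m else 0) +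
        (if bstr n (f e0) (f em1) j = y then wt2 n m else 0))) =
      (((if bstr n (f em1) (f e0) j = y then wt1 n m' else 0) +
        (if bstr n (f e1) (f em1) j = y then wt1 n m' else 0) +
        (if bstr n (f e0) (f e1) j = y then wt1 n m' else 0)) +
       ((if bstr n (f em1) (f e1) j = y then wt2 n m' else 0) +
        (if bstr n (f e1) (f e0) j = y then wt2 n m' else 0) +
        (if bstr n (f e0) (f em1) j = y then wt2 n m' else 0))) := by
    intro j m m'
    obtain ⟨I, hI⟩ : ∃ I : Fin 2 → Fin 2 → ℝ, ∀ (a b : Fin 2) (w : ℝ),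
        (if bstr n a b j = y then w else 0) = I a b * w :=
      ⟨fun a b => if bstr n a b j = y then 1 else 0,
        fun a b w => by by_cases h : bstr n a b j = y <;> simp [h]⟩
    simp only [hI]
    have t := tri (f em1) (f e0) (f e1) I
    have w := hw m m'
    linear_combination (wt1 n ↑m - wt1 n ↑m') * t +
      (I (f em1) (f e1) + I (f e1) (f e0) + I (f e0) (f em1)) * w
  rw [Finset.sum_congr rfl fun i (_ : i ∈ Finset.univ) => key (π i) i (π i)]
  exact Equiv.sum_comp π (fun j =>
    (((if bstr n (f em1) (f e0) j = y then wt1 n j else 0) +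
      (if bstr n (f e1) (f em1) j = y then wt1 n j else 0) +
      (if bstr n (f e0) (f e1) j = y then wt1 n j else 0)) +
     ((if bstr n (f em1) (f e1) j = y then wt2 n j else 0) +
      (if bstr n (f e1) (f e0) j = y then wt2 n j else 0) +
      (if bstr n (f e0) (f em1) j = y then wt2 n j else 0))))
end

section
/- For every n ≥ 2 there exists a probability distribution on {-1,0,1}ⁿ that is two-color exchangeable but not exchangeable. -/
def sgnZ (α β : ↥S3) : ℤ :=
  if ((α : ℤ) - β) % 3 = 2 then 1 else if ((α : ℤ) - β) % 3 = 1 then -1 else 0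
noncomputable def sgn (α β : ↥S3) : ℝ := (sgnZ α β : ℝ)
def strF (n : ℕ) (a b : Fin 2) (i : Fin n) : Fin n → Fin 2 :=
  fun k => if k = i then a else b
noncomputable def G (n : ℕ) (i0 : Fin n) (x : Fin n → ↥S3) : ℝ :=
  ∑ α : ↥S3, ∑ β : ↥S3, if x = str n α β i0 then sgn α β else 0

lemma keyZ : ∀ (f : ↥S3 → Fin 2) (R R' : Fin 2 → Fin 2 → Bool), (∀ a, R a a = R' a a) →
    (∑ α : ↥S3, ∑ β : ↥S3, if R (f α) (f β) then sgnZ α β else 0)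
      = ∑ α : ↥S3, ∑ β : ↥S3, if R' (f α) (f β) then sgnZ α β else 0 := by decide
lemma sgn_total : (∑ α : ↥S3, ∑ β : ↥S3, sgnZ α β) = 0 := by decide
lemma sgn_abs : ∀ α β : ↥S3, |sgnZ α β| ≤ 1 := by decide

lemma cast_sum (c : ↥S3 → ↥S3 → Prop) [∀ α β, Decidable (c α β)] :
    ((∑ α : ↥S3, ∑ β : ↥S3, if c α β then sgnZ α β else 0 : ℤ) : ℝ)
      = ∑ α : ↥S3, ∑ β : ↥S3, if c α β then sgn α β else 0 := by
  push_cast [sgn, apply_ite (Int.cast : ℤ → ℝ)]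
  rfl

lemma keyR (f : ↥S3 → Fin 2) (R R' : Fin 2 → Fin 2 → Bool) (h : ∀ a, R a a = R' a a) :
    (∑ α : ↥S3, ∑ β : ↥S3, if R (f α) (f β) then sgn α β else 0)
      = ∑ α : ↥S3, ∑ β : ↥S3, if R' (f α) (f β) then sgn α β else 0 := by
  rw [← cast_sum (fun α β => R (f α) (f β) = true), ← cast_sum (fun α β => R' (f α) (f β) = true)]
  exact congrArg (fun z : ℤ => (z : ℝ)) (keyZ f R R' h)

lemma indep (n : ℕ) (f : ↥S3 → Fin 2) (y : Fin n → Fin 2) (j j' : Fin n) :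
    (∑ α : ↥S3, ∑ β : ↥S3, if strF n (f α) (f β) j = y then sgn α β else 0)
      = ∑ α : ↥S3, ∑ β : ↥S3, if strF n (f α) (f β) j' = y then sgn α β else 0 := by
  have e : ∀ (j : Fin n), (∑ α : ↥S3, ∑ β : ↥S3, if strF n (f α) (f β) j = y then sgn α β else 0)
      = ∑ α : ↥S3, ∑ β : ↥S3, if (fun a b => decide (strF n a b j = y)) (f α) (f β) then sgn α β else 0 := by
    intro j
    refine Finset.sum_congr rfl fun α _ => Finset.sum_congr rfl fun β _ => ?_
    refine if_congr ?_ rfl rfl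
    exact (decide_eq_true_iff).symm
  rw [e j, e j']
  have hd : ∀ a : Fin 2, (fun a b => decide (strF n a b j = y)) a a
      = (fun a b => decide (strF n a b j' = y)) a a := by
    intro a
    simp only [decide_eq_decide]
    have h2 : strF n a a j = strF n a a j' := by funext k; simp [strF]
    rw [h2]
  exact keyR f (fun a b => decide (strF n a b j = y)) (fun a b => decide (strF n a b j' = y)) hd

lemma sumG (n : ℕ) (i0 : Fin n) (P : (Fin n → ↥S3) → Prop) [DecidablePred P] :
    (∑ x : Fin n → ↥S3, if P x then G n i0 x else 0)
      = ∑ α : ↥S3, ∑ β : ↥S3, if P (str n α β i0) then sgn α β else 0 := by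
  have e : ∀ x : Fin n → ↥S3, (if P x then G n i0 x else 0)
      = ∑ α : ↥S3, ∑ β : ↥S3, if x = str n α β i0 then (if P x then sgn α β else 0) else 0 := by
    intro x
    by_cases h : P x
    · simp only [h, if_true, G]
    · simp [h]
  rw [Finset.sum_congr rfl fun x _ => e x, Finset.sum_comm]
  refine Finset.sum_congr rfl fun α _ => ?_
  rw [Finset.sum_comm]
  refine Finset.sum_congr rfl fun β _ => ?_
  rw [Finset.sum_ite_eq' Finset.univ (str n α β i0) (fun x => if P x then sgn α β else 0)]
  simp

lemma Gval (n : ℕ) (i0 i1 : Fin n) (hne : i1 ≠ i0) (x : Fin n → ↥S3) :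
    G n i0 x = if x = str n (x i0) (x i1) i0 then sgn (x i0) (x i1) else 0 := by
  unfold G
  rw [Finset.sum_eq_single (x i0)]
  · rw [Finset.sum_eq_single (x i1)]
    · intro β _ hb
      rw [if_neg]
      intro h
      apply hb
      have := congrFun h i1
      simpa [str, hne] using this.symm
    · intro h; exact absurd (Finset.mem_univ _) h
  · intro α _ ha
    apply Finset.sum_eq_zero
    intro β _
    rw [if_neg]
    intro h
    apply ha
    have := congrFun h i0
    simpa [str] using this.symm
  · intro h; exact absurd (Finset.mem_univ _) h

lemma f_str (n : ℕ) (f : ↥S3 → Fin 2) (α β : ↥S3) (j : Fin n) :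
    (fun i => f (str n α β j i)) = strF n (f α) (f β) j := by
  funext k
  simp only [str, strF, apply_ite f]

lemma strF_shift (n : ℕ) (a b : Fin 2) (j : Fin n) (π : Equiv.Perm (Fin n))
    (y : Fin n → Fin 2) : strF n a b j = y ∘ ⇑π ↔ strF n a b (π j) = y := by
  constructor
  · intro h
    funext m
    have := congrFun h (π.symm m)
    simpa [strF, Equiv.symm_apply_eq] using this
  · intro h
    funext k
    have := congrFun h (π k)
    simpa [strF, Equiv.apply_eq_iff_eq] using this

lemma unif (n : ℕ) (c : ℝ) (f : ↥S3 → Fin 2) (π : Equiv.Perm (Fin n)) (y : Fin n → Fin 2) :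
    (∑ x : Fin n → ↥S3, if (fun i => f (x i)) = y ∘ ⇑π then c else 0)
      = ∑ x : Fin n → ↥S3, if (fun i => f (x i)) = y then c else 0 := by
  apply Fintype.sum_equiv (Equiv.arrowCongr π (Equiv.refl ↥S3))
  intro x
  refine if_congr ?_ rfl rfl
  constructor
  · intro h
    funext m
    have := congrFun h (π.symm m)
    simpa using this
  · intro h
    funext k
    have := congrFun h (π k)
    simpa using this

lemma expand (n : ℕ) (i0 : Fin n) (u : ℝ) (P : (Fin n → ↥S3) → Prop) [DecidablePred P] :
    (∑ x : Fin n → ↥S3, if P x then u + u / 2 * G n i0 x else 0)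
      = (∑ x : Fin n → ↥S3, if P x then u else 0)
        + u / 2 * ∑ x : Fin n → ↥S3, if P x then G n i0 x else 0 := by
  rw [Finset.mul_sum, ← Finset.sum_add_distrib]
  refine Finset.sum_congr rfl fun x _ => ?_
  split_ifs <;> ring

lemma gpart (n : ℕ) (i0 : Fin n) (f : ↥S3 → Fin 2) (π : Equiv.Perm (Fin n))
    (y : Fin n → Fin 2) :
    (∑ x : Fin n → ↥S3, if (fun i => f (x i)) = y ∘ ⇑π then G n i0 x else 0)
      = ∑ x : Fin n → ↥S3, if (fun i => f (x i)) = y then G n i0 x else 0 := by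
  rw [sumG n i0 (fun x => (fun i => f (x i)) = y ∘ ⇑π),
      sumG n i0 (fun x => (fun i => f (x i)) = y)]
  simp only [f_str, strF_shift]
  exact indep n f y (π i0) i0

lemma sum_sgn_zero : (∑ α : ↥S3, ∑ β : ↥S3, sgn α β) = 0 := by
  have : (∑ α : ↥S3, ∑ β : ↥S3, sgn α β)
      = ((∑ α : ↥S3, ∑ β : ↥S3, sgnZ α β : ℤ) : ℝ) := by
    push_cast [sgn]; rfl
  rw [this, sgn_total]; norm_num

lemma sgn_bound (α β : ↥S3) : -1 ≤ sgn α β ∧ sgn α β ≤ 1 := by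
  have h := sgn_abs α β
  have h2 : |sgn α β| ≤ 1 := by
    rw [sgn, ← Int.cast_abs]
    exact_mod_cast h
  exact abs_le.mp h2


/-- For every `n ≥ 2` there is a probability distribution on `{-1,0,1}ⁿ` that is
two-color exchangeable but not exchangeable. -/
theorem stmt_12 (n : ℕ) (hn : 2 ≤ n) :
    ∃ μ : (Fin n → ↥S3) → ℝ,
      (∀ x, 0 ≤ μ x) ∧
      (∑ x : Fin n → ↥S3, μ x = 1) ∧
      (∀ f : ↥S3 → Fin 2, ∀ π : Equiv.Perm (Fin n), ∀ y : Fin n → Fin 2,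
        (∑ x : Fin n → ↥S3, if (fun i => f (x i)) = y ∘ π then μ x else 0) =
          ∑ x : Fin n → ↥S3, if (fun i => f (x i)) = y then μ x else 0) ∧
      ¬ (∀ π : Equiv.Perm (Fin n), ∀ x : Fin n → ↥S3, μ (x ∘ π) = μ x) := by
  obtain ⟨i0, i1, hne⟩ : ∃ i0 i1 : Fin n, i1 ≠ i0 :=
    ⟨⟨0, by omega⟩, ⟨1, by omega⟩, by simp [Fin.ext_iff]⟩
  set u : ℝ := ((3 : ℝ) ^ n)⁻¹ with hu_def
  have hu : 0 < u := by positivity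
  refine ⟨fun x => u + u / 2 * G n i0 x, ?_, ?_, ?_, ?_⟩
  · -- nonnegativity
    intro x
    have hb := sgn_bound (x i0) (x i1)
    have : -1 ≤ G n i0 x := by
      rw [Gval n i0 i1 hne]
      split_ifs
      · exact hb.1
      · norm_num
    nlinarith
  · -- normalization
    have c2 : ∑ x : Fin n → ↥S3, G n i0 x = 0 := by
      have h := sumG n i0 (fun _ => True)
      simp only [if_true] at h
      rw [h, sum_sgn_zero]
    rw [Finset.sum_add_distrib, ← Finset.mul_sum, c2, Finset.sum_const,
        Finset.card_univ]
    have hcard : Fintype.card (Fin n → ↥S3) = 3 ^ n := by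
      rw [Fintype.card_fun]
      simp [Fintype.card_coe]
    rw [hcard]
    simp [hu_def]
  · -- two-color exchangeability
    intro f π y
    rw [expand n i0 u (fun x => (fun i => f (x i)) = y ∘ ⇑π),
        expand n i0 u (fun x => (fun i => f (x i)) = y),
        unif n u f π y, gpart n i0 f π y]
  · -- not exchangeable
    intro H
    have h := H (Equiv.swap i0 i1) (str n em1 e0 i0)
    set x : Fin n → ↥S3 := str n em1 e0 i0 with hx
    have hx0 : x i0 = em1 := by simp [hx, str]
    have hx1 : x i1 = e0 := by simp [hx, str, hne]
    have hGx : G n i0 x = 1 := by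
      rw [Gval n i0 i1 hne, hx0, hx1, if_pos rfl, sgn]
      norm_num [sgnZ, em1, e0]
    have hz0 : (x ∘ ⇑(Equiv.swap i0 i1)) i0 = e0 := by
      simp [Function.comp, Equiv.swap_apply_left, hx1]
    have hz1 : (x ∘ ⇑(Equiv.swap i0 i1)) i1 = em1 := by
      simp [Function.comp, Equiv.swap_apply_right, hx0]
    have hGz : G n i0 (x ∘ ⇑(Equiv.swap i0 i1)) ≤ 0 := by
      rw [Gval n i0 i1 hne, hz0, hz1]
      have : sgn e0 em1 = -1 := by
        rw [sgn]; norm_num [sgnZ, e0, em1]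
      split_ifs
      · rw [this]; norm_num
      · exact le_rfl
    simp only at h
    nlinarith [hGz, hGx]
end

section
/- For n ≥ 3 and the measure μ on Ω with μ(f_{-1,i})=μ(f_{1,i})=μ(s_{0,i})=(n-i+1)/(3n(n+1)) and μ(s_{-1,i})=μ(s_{1,i})=μ(f_{0,i})=i/(3n(n+1)), for each α ∈ {-1,0,1} the pushforward ν_α of μ under coordinatewise δ_α satisfies ν_α(ω) = 1/(3n) for every ω ∈ {0,1}ⁿ with ∑ωᵢ ∈ {1, n-1}. -/
/-! ### Auxiliary material -/

/-- The 0/1-string with `a` at position `i` and `b` elsewhere. -/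
def str2 (n : ℕ) (a b : Fin 2) (i : Fin n) : Fin n → Fin 2 := fun k => if k = i then a else b

lemma delta_str (n : ℕ) (γ β alp : ↥S3) (i : Fin n) :
    (fun k => if str n γ β i k = alp then (1 : Fin 2) else 0)
      = str2 n (if γ = alp then 1 else 0) (if β = alp then 1 else 0) i := by
  funext k
  simp only [str, str2]
  split <;> rfl

lemma str_ne {n : ℕ} {γ γ' β β' : ↥S3} (h : γ ≠ γ') (i : Fin n) :
    str n γ β i ≠ str n γ' β' i := fun he => h (by
  have := congrFun he i
  simpa [str] using this)

lemma sum_str2_10 (n : ℕ) (i : Fin n) : ∑ k, ((str2 n 1 0 i k : ℕ)) = 1 := by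
  have h : ∀ k ∈ Finset.univ, ((str2 n 1 0 i k : ℕ)) = if k = i then 1 else 0 := by
    intro k _; simp only [str2]; split <;> rfl
  rw [Finset.sum_congr rfl h, Finset.sum_ite_eq' Finset.univ i]
  simp

lemma sum_str2_01 (n : ℕ) (i : Fin n) : ∑ k, ((str2 n 0 1 i k : ℕ)) = n - 1 := by
  have h : ∑ k, ((str2 n 0 1 i k : ℕ)) + ∑ k, ((str2 n 1 0 i k : ℕ)) = n := by
    rw [← Finset.sum_add_distrib]
    have h2 : ∀ k ∈ Finset.univ, ((str2 n 0 1 i k : ℕ)) + ((str2 n 1 0 i k : ℕ)) = 1 := by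
      intro k _; simp only [str2]; split <;> rfl
    rw [Finset.sum_congr rfl h2]
    simp
  have := sum_str2_10 n i
  omega

lemma sum_str2_00 (n : ℕ) (i : Fin n) : ∑ k, ((str2 n 0 0 i k : ℕ)) = 0 := by
  simp [str2]

lemma fin2_eq_one {v : Fin 2} (h : (v : ℕ) ≠ 0) : v = 1 := by
  have := v.isLt
  exact Fin.ext (by simp; omega)

lemma exists_sum_one {n : ℕ} (ω : Fin n → Fin 2) (h : ∑ i, (ω i : ℕ) = 1) :
    ∃ j, ω = str2 n 1 0 j := by
  have hj : ∃ j : Fin n, (ω j : ℕ) ≠ 0 := by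
    by_contra hc
    push_neg at hc
    have : ∑ i, (ω i : ℕ) = 0 := Finset.sum_eq_zero fun i _ => hc i
    omega
  obtain ⟨j, hj⟩ := hj
  have hωj : ω j = 1 := fin2_eq_one hj
  have hrest : ∀ k ∈ Finset.univ.erase j, (ω k : ℕ) = 0 := by
    have hsplit := Finset.add_sum_erase Finset.univ (fun i => (ω i : ℕ)) (Finset.mem_univ j)
    have h1 : (ω j : ℕ) = 1 := by rw [hωj]; rfl
    have hz : ∑ x ∈ Finset.univ.erase j, (ω x : ℕ) = 0 := by omega
    exact fun k hk => Nat.le_zero.1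
      (hz ▸ Finset.single_le_sum (f := fun i => (ω i : ℕ)) (fun i _ => Nat.zero_le _) hk)
  refine ⟨j, funext fun k => ?_⟩
  by_cases hk : k = j
  · subst hk; simp [str2, hωj]
  · have : (ω k : ℕ) = 0 := hrest k (Finset.mem_erase.2 ⟨hk, Finset.mem_univ k⟩)
    have hz : ω k = 0 := Fin.ext (by simpa using this)
    simp [str2, hk, hz]

lemma exists_sum_pred {n : ℕ} (hn : 1 ≤ n) (ω : Fin n → Fin 2)
    (h : ∑ i, (ω i : ℕ) = n - 1) : ∃ j, ω = str2 n 0 1 j := by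
  set σ : Fin n → Fin 2 := fun i => 1 - ω i with hσ
  have hcompl : ∀ v : Fin 2, ((1 - v : Fin 2) : ℕ) + (v : ℕ) = 1 := by decide
  have hsum : ∑ i, (σ i : ℕ) + ∑ i, (ω i : ℕ) = n := by
    rw [← Finset.sum_add_distrib]
    rw [Finset.sum_congr rfl fun i _ => hcompl (ω i)]
    simp
  have hle : ∑ i, (ω i : ℕ) ≤ n := by omega
  have hσ1 : ∑ i, (σ i : ℕ) = 1 := by omega
  obtain ⟨j, hj⟩ := exists_sum_one σ hσ1
  refine ⟨j, funext fun k => ?_⟩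
  have hk := congrFun hj k
  have hinv : ∀ v : Fin 2, 1 - (1 - v) = v := by decide
  have : ω k = 1 - σ k := (by rw [hσ]; exact (hinv (ω k)).symm)
  rw [this, hk]
  simp only [str2]
  split <;> decide

lemma eq_str2_iff_10 {n : ℕ} {ω : Fin n → Fin 2} {j : Fin n} (hj : ω = str2 n 1 0 j) (i : Fin n) :
    (str2 n 1 0 i = ω) ↔ i = j := by
  constructor
  · intro h
    by_contra hij
    have := congrFun (h.trans hj) i
    simp [str2, hij] at this
  · rintro rfl; exact hj.symm

lemma eq_str2_iff_01 {n : ℕ} {ω : Fin n → Fin 2} {j : Fin n} (hj : ω = str2 n 0 1 j) (i : Fin n) :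
    (str2 n 0 1 i = ω) ↔ i = j := by
  constructor
  · intro h
    by_contra hij
    have := congrFun (h.trans hj) i
    simp [str2, hij] at this
  · rintro rfl; exact hj.symm

/-- The final computation. -/
lemma final_sum (n : ℕ) (hn : 3 ≤ n) (ω : Fin n → Fin 2)
    (hω : (∑ i, (ω i : ℕ)) = 1 ∨ (∑ i, (ω i : ℕ)) = n - 1) :
    ∑ i : Fin n,
      ((if str2 n 1 0 i = ω then ((n : ℝ) - (i : ℕ)) / (3 * n * (n + 1)) else 0)
      + (if str2 n 1 0 i = ω then (((i : ℕ) : ℝ) + 1) / (3 * n * (n + 1)) else 0)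
      + (if str2 n 0 1 i = ω then ((n : ℝ) - (i : ℕ)) / (3 * n * (n + 1)) else 0)
      + (if str2 n 0 1 i = ω then (((i : ℕ) : ℝ) + 1) / (3 * n * (n + 1)) else 0)
      + (if str2 n 0 0 i = ω then ((n : ℝ) - (i : ℕ)) / (3 * n * (n + 1)) else 0)
      + (if str2 n 0 0 i = ω then (((i : ℕ) : ℝ) + 1) / (3 * n * (n + 1)) else 0))
    = 1 / (3 * n) := by
  have hn1 : 1 ≤ n := by omega
  have hnR : (0 : ℝ) < n := by exact_mod_cast Nat.lt_of_lt_of_le (by norm_num) hn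
  have hden : (3 : ℝ) * n * (n + 1) ≠ 0 := by positivity
  have h00 : ∀ i : Fin n, ¬ (str2 n 0 0 i = ω) := by
    intro i h
    have h' := sum_str2_00 n i
    rw [h] at h'
    omega
  rcases hω with h1 | h1
  · obtain ⟨j, hj⟩ := exists_sum_one ω h1
    have h01 : ∀ i : Fin n, ¬ (str2 n 0 1 i = ω) := by
      intro i h
      have h' := sum_str2_01 n i
      rw [h] at h'
      omega
    have step : ∀ i ∈ Finset.univ, ((if str2 n 1 0 i = ω then ((n : ℝ) - (i : ℕ)) / (3 * n * (n + 1)) else 0)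
      + (if str2 n 1 0 i = ω then (((i : ℕ) : ℝ) + 1) / (3 * n * (n + 1)) else 0)
      + (if str2 n 0 1 i = ω then ((n : ℝ) - (i : ℕ)) / (3 * n * (n + 1)) else 0)
      + (if str2 n 0 1 i = ω then (((i : ℕ) : ℝ) + 1) / (3 * n * (n + 1)) else 0)
      + (if str2 n 0 0 i = ω then ((n : ℝ) - (i : ℕ)) / (3 * n * (n + 1)) else 0)
      + (if str2 n 0 0 i = ω then (((i : ℕ) : ℝ) + 1) / (3 * n * (n + 1)) else 0))
      = if i = j then ((n : ℝ) - (i : ℕ)) / (3 * n * (n + 1)) + (((i : ℕ) : ℝ) + 1) / (3 * n * (n + 1)) else 0 := by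
      intro i _
      simp only [eq_str2_iff_10 hj i, if_neg (h01 i), if_neg (h00 i)]
      by_cases hij : i = j <;> simp [hij]
    rw [Finset.sum_congr rfl step, Finset.sum_ite_eq' Finset.univ j]
    simp only [Finset.mem_univ, if_pos]
    rw [← add_div, show ((n : ℝ) - (j : ℕ) + (((j : ℕ) : ℝ) + 1)) = n + 1 by ring]
    field_simp
  · obtain ⟨j, hj⟩ := exists_sum_pred hn1 ω h1
    have h10 : ∀ i : Fin n, ¬ (str2 n 1 0 i = ω) := by
      intro i h
      have h' := sum_str2_10 n i
      rw [h] at h'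
      omega
    have step : ∀ i ∈ Finset.univ, ((if str2 n 1 0 i = ω then ((n : ℝ) - (i : ℕ)) / (3 * n * (n + 1)) else 0)
      + (if str2 n 1 0 i = ω then (((i : ℕ) : ℝ) + 1) / (3 * n * (n + 1)) else 0)
      + (if str2 n 0 1 i = ω then ((n : ℝ) - (i : ℕ)) / (3 * n * (n + 1)) else 0)
      + (if str2 n 0 1 i = ω then (((i : ℕ) : ℝ) + 1) / (3 * n * (n + 1)) else 0)
      + (if str2 n 0 0 i = ω then ((n : ℝ) - (i : ℕ)) / (3 * n * (n + 1)) else 0)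
      + (if str2 n 0 0 i = ω then (((i : ℕ) : ℝ) + 1) / (3 * n * (n + 1)) else 0))
      = if i = j then ((n : ℝ) - (i : ℕ)) / (3 * n * (n + 1)) + (((i : ℕ) : ℝ) + 1) / (3 * n * (n + 1)) else 0 := by
      intro i _
      simp only [eq_str2_iff_01 hj i, if_neg (h10 i), if_neg (h00 i)]
      by_cases hij : i = j <;> simp [hij]
    rw [Finset.sum_congr rfl step, Finset.sum_ite_eq' Finset.univ j]
    simp only [Finset.mem_univ, if_pos]
    rw [← add_div, show ((n : ℝ) - (j : ℕ) + (((j : ℕ) : ℝ) + 1)) = n + 1 by ring]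
    field_simp

lemma sum_if_three {β : Type*} [Fintype β] [DecidableEq β] (P : β → Prop) [DecidablePred P]
    (a b c : β) (hab : a ≠ b) (hac : a ≠ c) (hbc : b ≠ c) (w : ℝ) :
    ∑ x : β, (if P x then (if x = a ∨ x = b ∨ x = c then w else 0) else 0)
      = (if P a then w else 0) + (if P b then w else 0) + (if P c then w else 0) := by
  have key : ∀ x ∈ Finset.univ, (if P x then (if x = a ∨ x = b ∨ x = c then w else 0) else 0)
      = (if x = a then (if P a then w else 0) else 0)
      + (if x = b then (if P b then w else 0) else 0)
      + (if x = c then (if P c then w else 0) else 0) := by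
    intro x _
    by_cases hxa : x = a
    · subst hxa; simp [hab, hac]
    · by_cases hxb : x = b
      · subst hxb; simp [hxa, hbc]
      · by_cases hxc : x = c
        · subst hxc; simp [hxa, hxb]
        · simp [hxa, hxb, hxc]
  rw [Finset.sum_congr rfl key]
  rw [Finset.sum_add_distrib, Finset.sum_add_distrib]
  rw [Finset.sum_ite_eq' Finset.univ a, Finset.sum_ite_eq' Finset.univ b,
    Finset.sum_ite_eq' Finset.univ c]
  simp

lemma S3_cases : ∀ α : ↥S3, α = em1 ∨ α = e0 ∨ α = e1 := by decide


/-- For the measure `μ` of the paper and each `α ∈ {-1,0,1}`, the pushforward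
`ν_α` under coordinatewise `δ_α` gives mass `1/(3n)` to every `ω ∈ {0,1}ⁿ`
whose coordinate sum is `1` or `n-1`. -/
theorem stmt_18 (n : ℕ) (hn : 3 ≤ n) (α : ↥S3) (ω : Fin n → Fin 2)
    (hω : (∑ i, (ω i : ℕ)) = 1 ∨ (∑ i, (ω i : ℕ)) = n - 1) :
    (∑ x : Fin n → ↥S3,
        if (fun i => if x i = α then (1 : Fin 2) else 0) = ω then muPaper n x else 0) =
      1 / (3 * n) := by
  classical
  have hsplit : ∀ x ∈ (Finset.univ : Finset (Fin n → ↥S3)),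
      (if (fun i => if x i = α then (1 : Fin 2) else 0) = ω then muPaper n x else 0)
      = ∑ i : Fin n,
        ((if (fun k => if x k = α then (1 : Fin 2) else 0) = ω then
            (if x = str n em1 e0 i ∨ x = str n e1 em1 i ∨ x = str n e0 e1 i then
              ((n : ℝ) - (i : ℕ)) / (3 * n * (n + 1)) else 0) else 0)
        + (if (fun k => if x k = α then (1 : Fin 2) else 0) = ω then
            (if x = str n em1 e1 i ∨ x = str n e1 e0 i ∨ x = str n e0 em1 i then
              (((i : ℕ) : ℝ) + 1) / (3 * n * (n + 1)) else 0) else 0)) := by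
    intro x _
    by_cases h : (fun k => if x k = α then (1 : Fin 2) else 0) = ω
    · simp only [h, if_true, muPaper]
    · simp [h]
  rw [Finset.sum_congr rfl hsplit, Finset.sum_comm]
  have inner : ∀ i ∈ (Finset.univ : Finset (Fin n)),
      (∑ x : Fin n → ↥S3,
        ((if (fun k => if x k = α then (1 : Fin 2) else 0) = ω then
            (if x = str n em1 e0 i ∨ x = str n e1 em1 i ∨ x = str n e0 e1 i then
              ((n : ℝ) - (i : ℕ)) / (3 * n * (n + 1)) else 0) else 0)
        + (if (fun k => if x k = α then (1 : Fin 2) else 0) = ω then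
            (if x = str n em1 e1 i ∨ x = str n e1 e0 i ∨ x = str n e0 em1 i then
              (((i : ℕ) : ℝ) + 1) / (3 * n * (n + 1)) else 0) else 0)))
      = ((if (fun k => if str n em1 e0 i k = α then (1 : Fin 2) else 0) = ω then
            ((n : ℝ) - (i : ℕ)) / (3 * n * (n + 1)) else 0)
        + (if (fun k => if str n e1 em1 i k = α then (1 : Fin 2) else 0) = ω then
            ((n : ℝ) - (i : ℕ)) / (3 * n * (n + 1)) else 0)
        + (if (fun k => if str n e0 e1 i k = α then (1 : Fin 2) else 0) = ω then
            ((n : ℝ) - (i : ℕ)) / (3 * n * (n + 1)) else 0))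
        + ((if (fun k => if str n em1 e1 i k = α then (1 : Fin 2) else 0) = ω then
            (((i : ℕ) : ℝ) + 1) / (3 * n * (n + 1)) else 0)
        + (if (fun k => if str n e1 e0 i k = α then (1 : Fin 2) else 0) = ω then
            (((i : ℕ) : ℝ) + 1) / (3 * n * (n + 1)) else 0)
        + (if (fun k => if str n e0 em1 i k = α then (1 : Fin 2) else 0) = ω then
            (((i : ℕ) : ℝ) + 1) / (3 * n * (n + 1)) else 0)) := by
    intro i _
    rw [Finset.sum_add_distrib]
    rw [sum_if_three _ _ _ _ (str_ne (by decide) i) (str_ne (by decide) i) (str_ne (by decide) i)]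
    rw [sum_if_three _ _ _ _ (str_ne (by decide) i) (str_ne (by decide) i) (str_ne (by decide) i)]
  rw [Finset.sum_congr rfl inner]
  simp only [delta_str]
  have hα : α = em1 ∨ α = e0 ∨ α = e1 := S3_cases α
  rcases hα with rfl | rfl | rfl
  · refine Eq.trans (Finset.sum_congr rfl fun i _ => ?_) (final_sum n hn ω hω)
    norm_num [show (em1 = em1) = True by simp, show (e0 = em1) = False by simp [em1, e0, Subtype.ext_iff],
      show (e1 = em1) = False by simp [em1, e1, Subtype.ext_iff]]
    ring
  · refine Eq.trans (Finset.sum_congr rfl fun i _ => ?_) (final_sum n hn ω hω)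
    norm_num [show (e0 = e0) = True by simp, show (em1 = e0) = False by simp [em1, e0, Subtype.ext_iff],
      show (e1 = e0) = False by simp [e0, e1, Subtype.ext_iff]]
    ring
  · refine Eq.trans (Finset.sum_congr rfl fun i _ => ?_) (final_sum n hn ω hω)
    norm_num [show (e1 = e1) = True by simp, show (em1 = e1) = False by simp [em1, e1, Subtype.ext_iff],
      show (e0 = e1) = False by simp [e0, e1, Subtype.ext_iff]]
    ring
end
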